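/- arXiv:2007.01996 — 2 statements merged into one kernel-verified Lean document; each statement's English description precedes it below -/
import Mathlib

section
/- Let H be an n×n real symmetric positive definite matrix with smallest eigenvalue ℓ and largest eigenvalue L, 0 < ℓ < L, and write κ = L/ℓ. Then the infimum over α > 0 and β ∈ ℝ of the spectral radius ρ(T(I−αH, β)) equals (√(3κ+1) − 2)/√(3κ+1) = 1 − √(4ℓ/(3L+ℓ)), it is attained at α* = 4/(3L+ℓ) and β* = (√(3κ+1) − 2)/(√(3κ+1) + 2), and these are the unique optimal parameters: if ρ(T(I−αH, β)) = 1 − √(4ℓ/(3L+ℓ)) with α > 0, then α = α* and β = β*. Moreover 1 − √(4ℓ/(3L+ℓ)) < 1 − √(ℓ/L). -/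
/-- `lam : ℂ` is an eigenvalue (over `ℂ`) of the square real matrix `A`. -/
def IsCEigenvalue {n : Type*} [Fintype n] (A : Matrix n n ℝ) (lam : ℂ) : Prop :=
  ∃ v : n → ℂ, v ≠ 0 ∧ (A.map (Complex.ofReal)).mulVec v = lam • v

/-- The spectral radius of a square real matrix: the maximum modulus of its
eigenvalues over `ℂ`. -/
noncomputable def specRad {n : Type*} [Fintype n] (A : Matrix n n ℝ) : ℝ :=
  sSup {r : ℝ | ∃ lam : ℂ, IsCEigenvalue A lam ∧ r = ‖lam‖}

/-- The block matrix `T(M,β) = [[(1+β)M, −βM],[I, 0]]` (Jacobian of sAA(1)). -/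
noncomputable def TAA {n : ℕ} (M : Matrix (Fin n) (Fin n) ℝ) (β : ℝ) :
    Matrix (Fin n ⊕ Fin n) (Fin n ⊕ Fin n) ℝ :=
  Matrix.fromBlocks ((1 + β) • M) ((-β) • M) (1 : Matrix (Fin n) (Fin n) ℝ) 0


/-- positivity of ψ(s) = κs(4-s) - 3(2-s)² on [c,1) -/
lemma psi_pos (κ c s : ℝ) (hκ : 1 < κ) (hc0 : 0 < c) (hc1 : c < 1)
    (hc2 : c^2*(3*κ+1) = 4) (hcs : c ≤ s) (hs1 : s < 1) :
    0 < κ*s*(4-s) - 3*(2-s)^2 := by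
  have hψc : 3*c*(κ*c*(4-c) - 3*(2-c)^2) = 8*(2-c)*(1-c)^2 := by
    linear_combination (4 - c) * hc2
  have hψ1 : κ*1*(4-1) - 3*(2-1)^2 = 3*κ - 3 := by ring
  -- concavity identity: ψ(s)(1-c) = ψ(c)(1-s) + ψ(1)(s-c) + (κ+3)(s-c)(1-s)(1-c)
  nlinarith [mul_pos (sub_pos.2 hs1) hc0, mul_pos hc0 (sub_pos.2 hc1),
    mul_nonneg (sub_nonneg.2 hcs) (le_of_lt (sub_pos.2 hs1)),
    mul_pos (mul_pos (sub_pos.2 hs1) hc0) (sub_pos.2 hc1),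
    mul_nonneg (mul_nonneg (sub_nonneg.2 hcs) (le_of_lt (sub_pos.2 hs1))) (le_of_lt (sub_pos.2 hc1)),
    sq_nonneg (1-c), sq_nonneg (2-c), mul_pos hc0 hc0]

set_option maxHeartbeats 1000000 in
lemma scalarMain (κ c s t β : ℝ)
    (hκ : 1 < κ) (hc0 : 0 < c) (hc1 : c < 1) (hc2 : c^2*(3*κ+1) = 4)
    (hcs : c ≤ s) (hs1 : s < 1)
    (C1 : 0 ≤ (1-s)^2 - (1+β)*(1-t)*(1-s) + β*(1-t))
    (C2 : 0 ≤ (1-s)^2 + (1+β)*(1-κ*t)*(1-s) + β*(1-κ*t))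
    (C3 : β*(1-t) ≤ (1-s)^2)
    (C4' : β*(1-κ*t) ≤ (1-s)^2) :
    s = c ∧ t = c^2 ∧ β*(1+c) = 1-c := by
  have hs' : (0:ℝ) < 1 - s := by linarith
  have hs0 : (0:ℝ) < s := lt_of_lt_of_le hc0 hcs
  have hκ0 : (0:ℝ) < κ := by linarith
  -- step 1 : s^2 ≤ t
  have e1 : (1-s) * (t - s^2)
      = ((1-s)^2 - (1+β)*(1-t)*(1-s) + β*(1-t)) + s * ((1-s)^2 - β*(1-t)) := by ring
  have h1 : s^2 ≤ t := by
    have h := add_nonneg C1 (mul_nonneg hs0.le (by linarith : 0 ≤ (1-s)^2 - β*(1-t)))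
    rw [← e1] at h
    have := (mul_nonneg_iff_of_pos_left hs').mp h
    linarith
  -- step 2 : 1 < κ * t
  have hsc2 : c^2 ≤ s^2 := by nlinarith [hcs, hc0]
  have hκc2 : 3*(κ*c^2) = 4 - c^2 := by linear_combination hc2
  have hc2lt1 : c^2 < 1 := by nlinarith [hc0, hc1]
  have hκs2 : κ*c^2 ≤ κ*s^2 := mul_le_mul_of_nonneg_left hsc2 hκ0.le
  have hκt : κ*s^2 ≤ κ*t := mul_le_mul_of_nonneg_left h1 hκ0.le
  have h2 : 1 < κ * t := by linarith
  -- step 3 : κ t ≤ (2-s)^2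
  have hD2 : (1+β)*(κ*t-1) ≤ 2*(1-s) := by nlinarith [C2, C4', hs', mul_pos hs' hs']
  have h3 : κ*t ≤ (2-s)^2 := by nlinarith [hD2, C4']
  -- step 4 : (2-c)^2 < κ  and t < 1
  have h4 : (2-c)^2 < κ := by
    have hq : (0:ℝ) < 2+3*c-3*c^2 := by nlinarith [mul_pos hc0 (sub_pos.2 hc1)]
    have hfac : (0:ℝ) < (2-c)*((1-c)*(2+3*c-3*c^2)) :=
      mul_pos (by linarith) (mul_pos (by linarith) hq)
    have hkey : 3*c^2*κ - 3*c^2*(2-c)^2 = (2-c)*((1-c)*(2+3*c-3*c^2)) := by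
      linear_combination hc2
    have hdiff : (0:ℝ) < 3*c^2*κ - 3*c^2*(2-c)^2 := by rw [hkey]; exact hfac
    by_contra hcon
    push_neg at hcon
    have := mul_le_mul_of_nonneg_left hcon (by positivity : (0:ℝ) ≤ 3*c^2)
    linarith
  have h5 : t < 1 := by
    have hss : (2-s)^2 ≤ (2-c)^2 := pow_le_pow_left₀ (by linarith) (by linarith) 2
    have : κ*t < κ*1 := by rw [mul_one]; linarith
    exact (mul_lt_mul_iff_right₀ hκ0).mp this
  -- step 5 : Γ ≥ 0
  set Γ : ℝ := (κ*t-1)*(2-s)*(t-s) + (1-t)*s*(2-s-κ*t) with hΓdef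
  have e2 : (1-s) * Γ
      = ((κ*t-1)*(2-s)) * ((1-s)^2 - (1+β)*(1-t)*(1-s) + β*(1-t))
        + ((1-t)*s) * ((1-s)^2 + (1+β)*(1-κ*t)*(1-s) + β*(1-κ*t)) := by
    rw [hΓdef]; ring
  have hΓ : 0 ≤ Γ := by
    have h := add_nonneg
      (mul_nonneg (mul_nonneg (by linarith : (0:ℝ) ≤ κ*t-1) (by linarith : (0:ℝ) ≤ 2-s)) C1)
      (mul_nonneg (mul_nonneg (by linarith : (0:ℝ) ≤ 1-t) hs0.le) C2)
    rw [← e2] at h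
    exact (mul_nonneg_iff_of_pos_left hs').mp h
  -- master identity and endgame
  have hψ : 0 < κ*s*(4-s) - 3*(2-s)^2 := psi_pos κ c s hκ hc0 hc1 hc2 hcs hs1
  set X : ℝ := (2-s)^2 - κ*t with hXdef
  set Y : ℝ := κ*t - κ*s^2 with hYdef
  have hX : 0 ≤ X := by simp only [hXdef]; linarith
  have hY : 0 ≤ Y := by simp only [hYdef]; linarith
  set F : ℝ := (1-s)*(2-s)*(κ*s*(4-s)-3*(2-s)^2) with hFdef
  have hF : 0 < F := mul_pos (mul_pos hs' (by linarith)) hψ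
  set P : ℝ := κ*(s*(1-s)*(4-(3*κ+1)*s^2)) with hPdef
  have hiden : X*P = (X+Y)*(κ*Γ) + Y*F + 2*X*Y*(X+Y) := by
    simp only [hXdef, hYdef, hPdef, hΓdef, hFdef]; ring
  have hκΓ : 0 ≤ κ*Γ := mul_nonneg hκ0.le hΓ
  have hXP : 0 ≤ X*P := by
    rw [hiden]
    have h1' := mul_nonneg (by linarith : (0:ℝ) ≤ X+Y) hκΓ
    have h2' := mul_nonneg hY hF.le
    have h3' := mul_nonneg (mul_nonneg (mul_nonneg (by norm_num : (0:ℝ) ≤ 2) hX) hY)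
      (by linarith : (0:ℝ) ≤ X+Y)
    linarith [h3']
  have hGamma_at : t = s^2 → Γ = s*(1-s)*(4-(3*κ+1)*s^2) := by
    intro et; rw [hΓdef, et]; ring
  have hY0_of : X = 0 → Y = 0 := by
    intro hX0
    rw [hX0] at hiden
    have hsum : Y * (κ*Γ + F) = 0 := by rw [mul_add]; linarith [hiden]
    rcases mul_eq_zero.mp hsum with h | h
    · exact h
    · linarith
  have hsc : s ≤ c := by
    by_contra hcon
    push_neg at hcon
    have hs2 : c^2 < s^2 := by nlinarith [hc0]
    have hneg : 4-(3*κ+1)*s^2 < 0 := by nlinarith [hs2, hc2, hκ0]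
    have hPneg : P < 0 := by
      simp only [hPdef]
      exact mul_neg_of_pos_of_neg hκ0 (mul_neg_of_pos_of_neg (mul_pos hs0 hs') hneg)
    have hXP0 : X*P = 0 :=
      le_antisymm (mul_nonpos_of_nonneg_of_nonpos hX hPneg.le) hXP
    have hX0 : X = 0 := by
      rcases mul_eq_zero.mp hXP0 with h | h
      · exact h
      · exact absurd h hPneg.ne
    have hY0 : Y = 0 := hY0_of hX0
    have et : t = s^2 := by
      have : κ*t = κ*s^2 := by simp only [hYdef] at hY0; linarith
      exact mul_left_cancel₀ hκ0.ne' this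
    have hGneg : Γ < 0 := by
      rw [hGamma_at et]
      exact mul_neg_of_pos_of_neg (mul_pos hs0 hs') hneg
    linarith
  have hsceq : s = c := le_antisymm hsc hcs
  -- now t = c^2
  have hP0 : P = 0 := by
    simp only [hPdef, hsceq]
    have : 4-(3*κ+1)*c^2 = 0 := by linarith [hc2]
    rw [this]; ring
  have hX0 : X = 0 ∨ Y = 0 := by
    by_cases hc : Y = 0
    · exact Or.inr hc
    · left
      rw [hP0, mul_zero] at hiden
      have h2' := mul_pos (lt_of_le_of_ne hY (Ne.symm hc)) hF
      have h1' := mul_nonneg (by linarith : (0:ℝ) ≤ X+Y) hκΓ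
      have h3' := mul_nonneg (mul_nonneg (mul_nonneg (by norm_num : (0:ℝ) ≤ 2) hX) hY)
        (by linarith : (0:ℝ) ≤ X+Y)
      linarith
  have hY0 : Y = 0 := by
    rcases hX0 with h | h
    · exact hY0_of h
    · exact h
  have et : t = s^2 := by
    have : κ*t = κ*s^2 := by simp only [hYdef] at hY0; linarith
    exact mul_left_cancel₀ hκ0.ne' this
  have htc : t = c^2 := by rw [et, hsceq]
  refine ⟨hsceq, htc, ?_⟩
  -- β extraction
  have hzero : (1-s) * (t - s^2) = 0 := by rw [et]; ring
  have hC3gap : (1-s)^2 - β*(1-t) = 0 := by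
    have h2' : 0 ≤ s * ((1-s)^2 - β*(1-t)) :=
      mul_nonneg hs0.le (by linarith)
    have hsum0 : ((1-s)^2 - (1+β)*(1-t)*(1-s) + β*(1-t)) + s * ((1-s)^2 - β*(1-t)) = 0 := by
      rw [← e1]; exact hzero
    have : s * ((1-s)^2 - β*(1-t)) = 0 := by linarith
    rcases mul_eq_zero.mp this with h | h
    · exact absurd h hs0.ne'
    · exact h
  have hc1' : (0:ℝ) < 1 - c := by linarith
  have hbt : β * (1 - t) = (1-s)^2 := by linarith [hC3gap]
  have : β * (1 - c^2) = (1-c)^2 := by rw [← htc, ← hsceq]; exact hbt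
  have hfin : (1-c) * (β*(1+c) - (1-c)) = 0 := by ring_nf; linear_combination this
  rcases mul_eq_zero.mp hfin with h | h
  · linarith
  · linarith

lemma opt_cond (ℓ L μ c : ℝ) (hℓ : 0 < ℓ) (hℓL : ℓ < L) (hc0 : 0 < c) (hc1 : c < 1)
    (hc2 : c^2 * (3*L+ℓ) = 4*ℓ) (hμ1 : ℓ ≤ μ) (hμ2 : μ ≤ L) :
    (0 ≤ (1-c)^2 - (1+(1-c)/(1+c))*(1-(4/(3*L+ℓ))*μ)*(1-c)
        + ((1-c)/(1+c))*(1-(4/(3*L+ℓ))*μ))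
    ∧ (0 ≤ (1-c)^2 + (1+(1-c)/(1+c))*(1-(4/(3*L+ℓ))*μ)*(1-c)
        + ((1-c)/(1+c))*(1-(4/(3*L+ℓ))*μ))
    ∧ |((1-c)/(1+c))*(1-(4/(3*L+ℓ))*μ)| ≤ (1-c)^2 := by
  have hD : (0:ℝ) < 3*L+ℓ := by linarith
  have h1c : (0:ℝ) < 1+c := by linarith
  have hP : (0:ℝ) < (1+c)*(3*L+ℓ) := mul_pos h1c hD
  have key1 : ((1-c)^2 - (1+(1-c)/(1+c))*(1-(4/(3*L+ℓ))*μ)*(1-c)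
      + ((1-c)/(1+c))*(1-(4/(3*L+ℓ))*μ)) * ((1+c)*(3*L+ℓ))
      = (1-c)*(4*(μ-ℓ)) := by
    field_simp
    linear_combination (c-1)*hc2
  have key2 : ((1-c)^2 + (1+(1-c)/(1+c))*(1-(4/(3*L+ℓ))*μ)*(1-c)
      + ((1-c)/(1+c))*(1-(4/(3*L+ℓ))*μ)) * ((1+c)*(3*L+ℓ))
      = (1-c)*(12*(L-μ)) := by
    field_simp
    linear_combination (c-1)*hc2
  have key3u : ((1-c)^2 - ((1-c)/(1+c))*(1-(4/(3*L+ℓ))*μ)) * ((1+c)*(3*L+ℓ))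
      = (1-c)*(4*(μ-ℓ)) := by
    field_simp
    linear_combination (c-1)*hc2
  have key3l : ((1-c)^2 + ((1-c)/(1+c))*(1-(4/(3*L+ℓ))*μ)) * ((1+c)*(3*L+ℓ))
      = (1-c)*(2*(3*L-ℓ-2*μ)) := by
    field_simp
    linear_combination (c-1)*hc2
  have h1 := (mul_nonneg_iff_of_pos_right hP).mp
    (key1 ▸ (mul_nonneg (by linarith : (0:ℝ) ≤ 1-c) (by linarith)))
  have h2 := (mul_nonneg_iff_of_pos_right hP).mp
    (key2 ▸ (mul_nonneg (by linarith : (0:ℝ) ≤ 1-c) (by linarith)))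
  have h3u := (mul_nonneg_iff_of_pos_right hP).mp
    (key3u ▸ (mul_nonneg (by linarith : (0:ℝ) ≤ 1-c) (by linarith)))
  have h3l := (mul_nonneg_iff_of_pos_right hP).mp
    (key3l ▸ (mul_nonneg (by linarith : (0:ℝ) ≤ 1-c) (by linarith)))
  exact ⟨h1, h2, abs_le.mpr ⟨by linarith, by linarith⟩⟩

/-- Sufficiency: the Jury-type conditions bound all complex roots of the quadratic. -/
lemma quad_root_bound (m β ρ : ℝ) (hρ : 0 < ρ)
    (Hp : 0 ≤ ρ^2 - (1+β)*m*ρ + β*m)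
    (Hm : 0 ≤ ρ^2 + (1+β)*m*ρ + β*m)
    (Hprod : |β*m| ≤ ρ^2)
    (lam : ℂ) (hq : lam^2 - (1+β)*m*lam + β*m = 0) : ‖lam‖ ≤ ρ := by
  obtain ⟨hlb, hub⟩ := abs_le.mp Hprod
  by_cases him : lam.im = 0
  · -- real root
    have hx : lam = (lam.re : ℂ) := Complex.ext rfl (by simp [him])
    set x : ℝ := lam.re with hxdef
    have hqr : x^2 - (1+β)*m*x + β*m = 0 := by
      have h := hq
      rw [hx] at h
      exact_mod_cast h
    rw [hx, Complex.norm_real, Real.norm_eq_abs]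
    by_contra hcon
    push_neg at hcon
    rcases lt_abs.mp hcon with hxgt | hxgt
    · -- x > ρ
      have hfac : (ρ - x) * (ρ - ((1+β)*m - x)) = ρ^2 - (1+β)*m*ρ + β*m := by
        linear_combination -hqr
      have hx' : 0 ≤ ((1+β)*m - x) - ρ := by nlinarith [Hp, hfac, hxgt, hρ]
      nlinarith [hub, hqr, hx', hxgt, hρ, mul_nonneg hx' hρ.le]
    · -- -x > ρ
      have hfac : (ρ + x) * (ρ + ((1+β)*m - x)) = ρ^2 + (1+β)*m*ρ + β*m := by
        linear_combination -hqr
      have hx' : ((1+β)*m - x) + ρ ≤ 0 := by nlinarith [Hm, hfac, hxgt, hρ]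
      nlinarith [hub, hqr, hx', hxgt, hρ, mul_nonneg (by linarith : (0:ℝ) ≤ -(((1+β)*m - x) + ρ) + ρ) hρ.le]
  · -- nonreal root: conjugate is the other root
    have hqc : (starRingEnd ℂ lam)^2 - (1+β)*m*(starRingEnd ℂ lam) + β*m = 0 := by
      have h := congrArg (starRingEnd ℂ) hq
      simpa using h
    have hfac : (starRingEnd ℂ lam - lam) * (starRingEnd ℂ lam - (((1+β)*m : ℝ) - lam)) = 0 := by
      push_cast
      linear_combination hqc - hq
    have hne : starRingEnd ℂ lam - lam ≠ 0 := by
      intro h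
      exact him (Complex.conj_eq_iff_im.mp (sub_eq_zero.mp h))
    have hconj : starRingEnd ℂ lam = (((1+β)*m : ℝ) : ℂ) - lam := by
      rcases mul_eq_zero.mp hfac with h | h
      · exact absurd h hne
      · exact sub_eq_zero.mp h
    have hprodc : lam * starRingEnd ℂ lam = ((β*m : ℝ) : ℂ) := by
      rw [hconj]
      push_cast
      linear_combination -hq
    have hnsq : Complex.normSq lam = β*m := by
      have := hprodc
      rw [Complex.mul_conj] at this
      exact_mod_cast this
    have habs2 : (‖lam‖)^2 ≤ ρ^2 := by
      rw [Complex.sq_norm, hnsq]; exact hub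
    nlinarith [norm_nonneg lam, hρ]

/-- Necessity: if all complex roots have modulus ≤ ρ then Jury conditions hold. -/
lemma quad_conditions (m β ρ : ℝ) (hρ : 0 < ρ)
    (hall : ∀ lam : ℂ, lam^2 - (1+β)*m*lam + β*m = 0 → ‖lam‖ ≤ ρ) :
    (0 ≤ ρ^2 - (1+β)*m*ρ + β*m) ∧ (0 ≤ ρ^2 + (1+β)*m*ρ + β*m) ∧ |β*m| ≤ ρ^2 := by
  set d : ℝ := ((1+β)*m)^2 - 4*(β*m) with hddef
  by_cases hd : 0 ≤ d
  · have he : Real.sqrt d ^ 2 = d := Real.sq_sqrt hd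
    set r₁ : ℝ := ((1+β)*m + Real.sqrt d)/2 with hr1def
    set r₂ : ℝ := ((1+β)*m - Real.sqrt d)/2 with hr2def
    have hq1 : r₁^2 - (1+β)*m*r₁ + β*m = 0 := by
      rw [hr1def]; linear_combination (1/4 : ℝ) * he
    have hq2 : r₂^2 - (1+β)*m*r₂ + β*m = 0 := by
      rw [hr2def]; linear_combination (1/4 : ℝ) * he
    have hsum : r₁ + r₂ = (1+β)*m := by rw [hr1def, hr2def]; ring
    have hprod : r₁ * r₂ = β*m := by
      rw [hr1def, hr2def]; linear_combination (-(1/4) : ℝ) * he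
    have hb1 : |r₁| ≤ ρ := by
      have := hall (r₁ : ℂ) (by exact_mod_cast congrArg (Complex.ofReal) hq1)
      rwa [Complex.norm_real, Real.norm_eq_abs] at this
    have hb2 : |r₂| ≤ ρ := by
      have := hall (r₂ : ℂ) (by exact_mod_cast congrArg (Complex.ofReal) hq2)
      rwa [Complex.norm_real, Real.norm_eq_abs] at this
    have h1u : r₁ ≤ ρ := le_trans (le_abs_self _) hb1
    have h1l : -ρ ≤ r₁ := neg_le_of_abs_le hb1
    have h2u : r₂ ≤ ρ := le_trans (le_abs_self _) hb2
    have h2l : -ρ ≤ r₂ := neg_le_of_abs_le hb2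
    refine ⟨?_, ?_, ?_⟩
    · have e : ρ^2 - (1+β)*m*ρ + β*m = (ρ - r₁)*(ρ - r₂) := by
        linear_combination (-ρ) * hsum + hprod + (1/2 : ℝ) * he
      rw [e]; exact mul_nonneg (by linarith) (by linarith)
    · have e : ρ^2 + (1+β)*m*ρ + β*m = (ρ + r₁)*(ρ + r₂) := by
        linear_combination ρ * hsum + hprod + (1/2 : ℝ) * he
      rw [e]; exact mul_nonneg (by linarith) (by linarith)
    · rw [← hprod, abs_mul]
      calc |r₁| * |r₂| ≤ ρ * ρ :=
            mul_le_mul hb1 hb2 (abs_nonneg _) hρ.le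
        _ = ρ^2 := by ring
  · push_neg at hd
    have hdneg : d < 0 := hd
    have hbm : 0 < β*m := by nlinarith [sq_nonneg ((1+β)*m)]
    refine ⟨by nlinarith [sq_nonneg (ρ - (1+β)*m/2)], by nlinarith [sq_nonneg (ρ + (1+β)*m/2)], ?_⟩
    have hsq : Real.sqrt (-d) ^ 2 = -d := Real.sq_sqrt (by linarith)
    set y : ℝ := Real.sqrt (-d)/2 with hydef
    set x : ℝ := (1+β)*m/2 with hxdef
    set lam : ℂ := (x : ℂ) + (y : ℂ) * Complex.I with hlamdef
    have h0 : x^2 - (1+β)*m*x + β*m - y^2 = 0 := by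
      rw [hxdef, hydef]; linear_combination (-(1/4) : ℝ) * hsq
    have hroot : lam^2 - (1+β)*m*lam + β*m = 0 := by
      rw [hlamdef]
      have h0C := congrArg (Complex.ofReal) h0
      have hxC : ((x:ℝ):ℂ) = (1+(β:ℂ))*(m:ℂ)/2 := by rw [hxdef]; push_cast; ring
      push_cast at h0C ⊢
      linear_combination ((y:ℝ):ℂ)^2 * Complex.I_sq + h0C + 2*((y:ℝ):ℂ)*Complex.I * hxC
    have habs := hall lam hroot
    have hnsq : Complex.normSq lam = x^2 + y^2 := by
      rw [hlamdef]; exact Complex.normSq_add_mul_I x y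
    have hxy : x^2 + y^2 = β*m := by
      rw [hxdef, hydef]; linear_combination (1/4 : ℝ) * hsq
    have : (‖lam‖)^2 ≤ ρ^2 := by nlinarith [norm_nonneg lam]
    rw [Complex.sq_norm, hnsq, hxy] at this
    rw [abs_of_pos hbm]
    exact this
open Matrix in
lemma taa_map {n : ℕ} (M : Matrix (Fin n) (Fin n) ℝ) (β : ℝ) :
    (TAA M β).map Complex.ofReal =
      Matrix.fromBlocks (((1:ℂ) + β) • M.map Complex.ofReal)
        ((-(β:ℂ)) • M.map Complex.ofReal) (1 : Matrix (Fin n) (Fin n) ℂ) 0 := by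
  rw [TAA, Matrix.fromBlocks_map]
  have h1 : ((1 + β) • M).map Complex.ofReal = ((1:ℂ) + β) • M.map Complex.ofReal := by
    ext i j; simp [Matrix.map_apply]
  have h2 : ((-β) • M).map Complex.ofReal = (-(β:ℂ)) • M.map Complex.ofReal := by
    ext i j; simp [Matrix.map_apply]
  have h3 : (1 : Matrix (Fin n) (Fin n) ℝ).map Complex.ofReal = 1 :=
    Matrix.map_one _ (by simp) (by simp)
  have h4 : (0 : Matrix (Fin n) (Fin n) ℝ).map Complex.ofReal = 0 := by
    ext i j; simp
  rw [h1, h2, h3, h4]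

open Matrix in
lemma taa_eig_of_quad {n : ℕ} (M : Matrix (Fin n) (Fin n) ℝ) (β : ℝ) (m lam : ℂ)
    (v : Fin n → ℂ) (hv : v ≠ 0) (hM : (M.map Complex.ofReal).mulVec v = m • v)
    (hq : lam^2 - (1+β)*m*lam + β*m = 0) : IsCEigenvalue (TAA M β) lam := by
  refine ⟨Sum.elim (lam • v) v, ?_, ?_⟩
  · intro h
    apply hv
    funext i
    exact congrFun h (Sum.inr i)
  · rw [taa_map, Matrix.fromBlocks_mulVec]
    have hl : (Sum.elim (lam • v) v) ∘ Sum.inl = lam • v := rfl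
    have hr : (Sum.elim (lam • v) v) ∘ Sum.inr = v := rfl
    rw [hl, hr]
    funext i
    cases i with
    | inl i =>
      simp only [Sum.elim_inl, Pi.add_apply, Pi.smul_apply, smul_eq_mul]
      have h1 : (((1:ℂ) + β) • M.map Complex.ofReal) *ᵥ (lam • v)
          = (((1:ℂ)+β) * lam * m) • v := by
        rw [smul_mulVec, mulVec_smul, hM]
        ext j; simp; ring
      have h2 : ((-(β:ℂ)) • M.map Complex.ofReal) *ᵥ v = ((-(β:ℂ)) * m) • v := by
        rw [smul_mulVec, hM]
        ext j; simp; ring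
      rw [h1, h2]
      simp only [Pi.add_apply, Pi.smul_apply, smul_eq_mul]
      have : ((1:ℂ)+β) * lam * m + (-(β:ℂ)) * m = lam * lam := by linear_combination -hq
      calc ((1:ℂ)+β) * lam * m * v i + (-(β:ℂ)) * m * v i
          = (((1:ℂ)+β) * lam * m + (-(β:ℂ)) * m) * v i := by ring
        _ = (lam * lam) * v i := by rw [this]
        _ = lam * (lam * v i) := by ring
    | inr i =>
      simp [Matrix.one_mulVec, Matrix.zero_mulVec]

open Matrix in
lemma taa_eig_to_quad {n : ℕ} (M : Matrix (Fin n) (Fin n) ℝ) (β : ℝ) (lam : ℂ)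
    (h : IsCEigenvalue (TAA M β) lam) :
    lam = 0 ∨ ∃ (m : ℂ) (v : Fin n → ℂ), v ≠ 0 ∧
      (M.map Complex.ofReal).mulVec v = m • v ∧ lam^2 - (1+β)*m*lam + β*m = 0 := by
  obtain ⟨w, hw, hmul⟩ := h
  rw [taa_map, Matrix.fromBlocks_mulVec] at hmul
  set x : Fin n → ℂ := w ∘ Sum.inl with hxdef
  set y : Fin n → ℂ := w ∘ Sum.inr with hydef
  have hbot : x = lam • y := by
    funext i
    have := congrFun hmul (Sum.inr i)
    simpa [Matrix.one_mulVec, Matrix.zero_mulVec, hxdef, hydef] using this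
  have hy : y ≠ 0 := by
    intro h0
    apply hw
    funext i
    cases i with
    | inl i =>
      have : x i = 0 := by rw [hbot, h0]; simp
      exact this
    | inr i => exact congrFun h0 i
  have htop : (((1:ℂ)+β) * lam - β) • ((M.map Complex.ofReal) *ᵥ y) = (lam * lam) • y := by
    funext i
    have h1 := congrFun hmul (Sum.inl i)
    simp only [Sum.elim_inl, Pi.add_apply, Pi.smul_apply, smul_eq_mul] at h1 ⊢
    have hxl : ∀ j, x j = lam * y j := fun j => by
      have := congrFun hbot j; simpa using this
    -- h1 : ((1+β) • M') *ᵥ x + ((-β) • M') *ᵥ y at i = lam * w (inl i) = lam * x i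
    rw [smul_mulVec, smul_mulVec] at h1
    simp only [Pi.add_apply, Pi.smul_apply, smul_eq_mul] at h1
    have hMx : ((M.map Complex.ofReal) *ᵥ x) i = lam * ((M.map Complex.ofReal) *ᵥ y) i := by
      rw [hbot, mulVec_smul]; simp
    rw [hMx] at h1
    have hwx : w (Sum.inl i) = lam * y i := hxl i
    rw [hwx] at h1
    linear_combination h1
  by_cases hc : ((1:ℂ)+β) * lam - β = 0
  · left
    rw [hc] at htop
    have : (lam * lam) • y = 0 := by rw [← htop]; simp
    rcases smul_eq_zero.mp this with h0 | h0
    · have := mul_self_eq_zero.mp h0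
      exact this
    · exact absurd h0 hy
  · right
    refine ⟨lam * lam / (((1:ℂ)+β) * lam - β), y, hy, ?_, ?_⟩
    · have := htop
      funext i
      have h1 := congrFun this i
      simp only [Pi.smul_apply, smul_eq_mul] at h1 ⊢
      rw [div_mul_eq_mul_div, eq_div_iff hc]
      linear_combination h1
    · linear_combination (-lam^2) * mul_inv_cancel₀ hc

open Matrix in
lemma symm_eig_real {n : ℕ} (H : Matrix (Fin n) (Fin n) ℝ) (hsymm : H.IsSymm)
    (m : ℂ) (v : Fin n → ℂ) (hv : v ≠ 0)
    (hmul : (H.map Complex.ofReal).mulVec v = m • v) :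
    m.im = 0 ∧ ∃ w : Fin n → ℝ, w ≠ 0 ∧ H.mulVec w = m.re • w := by
  set a : Fin n → ℝ := fun i => (v i).re with hadef
  set b : Fin n → ℝ := fun i => (v i).im with hbdef
  have hre : ∀ i, (H.mulVec a) i = m.re * a i - m.im * b i := by
    intro i
    have h := congrArg Complex.re (congrFun hmul i)
    simpa [Matrix.mulVec, dotProduct, Complex.re_sum, Complex.mul_re,
      hadef, hbdef] using h
  have him : ∀ i, (H.mulVec b) i = m.re * b i + m.im * a i := by
    intro i
    have h := congrArg Complex.im (congrFun hmul i)
    simpa [Matrix.mulVec, dotProduct, Complex.im_sum, Complex.mul_im,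
      hadef, hbdef] using h
  have hsym : a ⬝ᵥ (H *ᵥ b) = b ⬝ᵥ (H *ᵥ a) := by
    rw [Matrix.dotProduct_mulVec a H b, ← Matrix.mulVec_transpose, hsymm.eq,
      dotProduct_comm]
  have hS : ∀ i, a i * (H *ᵥ b) i - b i * (H *ᵥ a) i = m.im * ((a i)^2 + (b i)^2) := by
    intro i
    rw [hre i, him i]; ring
  have hsum : m.im * (∑ i, ((a i)^2 + (b i)^2)) = 0 := by
    rw [Finset.mul_sum]
    have : ∑ i, m.im * ((a i)^2 + (b i)^2)
        = ∑ i, (a i * (H *ᵥ b) i - b i * (H *ᵥ a) i) := by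
      apply Finset.sum_congr rfl
      intro i _
      rw [hS i]
    rw [this, Finset.sum_sub_distrib]
    have e1 : ∑ i, a i * (H *ᵥ b) i = a ⬝ᵥ (H *ᵥ b) := rfl
    have e2 : ∑ i, b i * (H *ᵥ a) i = b ⬝ᵥ (H *ᵥ a) := rfl
    rw [e1, e2, hsym, sub_self]
  have hSpos : 0 < ∑ i, ((a i)^2 + (b i)^2) := by
    obtain ⟨i0, hi0⟩ : ∃ i, v i ≠ 0 := by
      by_contra hcon
      push_neg at hcon
      exact hv (funext fun i => hcon i)
    apply Finset.sum_pos'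
    · intro i _; positivity
    · refine ⟨i0, Finset.mem_univ _, ?_⟩
      have : a i0 ≠ 0 ∨ b i0 ≠ 0 := by
        by_contra hcon
        push_neg at hcon
        exact hi0 (Complex.ext hcon.1 hcon.2)
      rcases this with h | h
      · positivity
      · positivity
  have him0 : m.im = 0 := by
    rcases mul_eq_zero.mp hsum with h | h
    · exact h
    · exact absurd h hSpos.ne'
  refine ⟨him0, ?_⟩
  have hae : H.mulVec a = m.re • a := by
    funext i; rw [hre i, him0]; simp
  have hbe : H.mulVec b = m.re • b := by
    funext i; rw [him i, him0]; simp
  by_cases ha : a = 0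
  · refine ⟨b, ?_, hbe⟩
    intro hb0
    apply hv
    funext i
    have h1 : a i = 0 := congrFun ha i
    have h2 : b i = 0 := congrFun hb0 i
    exact Complex.ext h1 h2
  · exact ⟨a, ha, hae⟩

open Matrix in
lemma one_sub_smul_map {n : ℕ} (H : Matrix (Fin n) (Fin n) ℝ) (α : ℝ) :
    (((1 : Matrix (Fin n) (Fin n) ℝ) - α • H).map Complex.ofReal)
      = (1 : Matrix (Fin n) (Fin n) ℂ) - (α:ℂ) • H.map Complex.ofReal := by
  ext i j
  by_cases h : i = j <;> simp [Matrix.map_apply, Matrix.one_apply, h]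

open Matrix in
lemma eig_shift {n : ℕ} (H : Matrix (Fin n) (Fin n) ℝ) (α : ℝ) (hα : α ≠ 0)
    (m : ℂ) (v : Fin n → ℂ)
    (h : (((1 : Matrix (Fin n) (Fin n) ℝ) - α • H).map Complex.ofReal).mulVec v = m • v) :
    (H.map Complex.ofReal).mulVec v = (((1 - m)/α : ℂ)) • v := by
  rw [one_sub_smul_map, Matrix.sub_mulVec, Matrix.one_mulVec, smul_mulVec] at h
  funext i
  have h1 := congrFun h i
  simp only [Pi.sub_apply, Pi.smul_apply, smul_eq_mul] at h1 ⊢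
  have hαC : (α:ℂ) ≠ 0 := by exact_mod_cast hα
  field_simp
  linear_combination (-1 : ℂ) * h1

lemma isCEig_finite {N : Type*} [Fintype N] [DecidableEq N] (A : Matrix N N ℝ) :
    {lam : ℂ | IsCEigenvalue A lam}.Finite := by
  apply Set.Finite.subset
    (Module.End.finite_hasEigenvalue (Matrix.toLin' (A.map Complex.ofReal)))
  rintro lam ⟨v, hv, hm⟩
  exact Module.End.hasEigenvalue_of_hasEigenvector
    ⟨Module.End.mem_eigenspace_iff.mpr (by rw [Matrix.toLin'_apply]; exact hm), hv⟩

lemma specRad_set_eq {N : Type*} [Fintype N] (A : Matrix N N ℝ) :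
    {r : ℝ | ∃ lam : ℂ, IsCEigenvalue A lam ∧ r = ‖lam‖}
      = (fun z : ℂ => ‖z‖) '' {lam : ℂ | IsCEigenvalue A lam} := by
  ext r
  simp only [Set.mem_setOf_eq, Set.mem_image]
  constructor
  · rintro ⟨lam, h, rfl⟩; exact ⟨lam, h, rfl⟩
  · rintro ⟨lam, h, rfl⟩; exact ⟨lam, h, rfl⟩

lemma abs_le_specRad {N : Type*} [Fintype N] [DecidableEq N] (A : Matrix N N ℝ) {lam : ℂ}
    (h : IsCEigenvalue A lam) : ‖lam‖ ≤ specRad A := by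
  apply le_csSup
  · rw [specRad_set_eq]
    exact ((isCEig_finite A).image _).bddAbove
  · exact ⟨lam, h, rfl⟩

lemma specRad_le_of {N : Type*} [Fintype N] (A : Matrix N N ℝ) {b : ℝ}
    (hne : ∃ lam : ℂ, IsCEigenvalue A lam)
    (hb : ∀ lam : ℂ, IsCEigenvalue A lam → ‖lam‖ ≤ b) : specRad A ≤ b := by
  apply csSup_le
  · obtain ⟨lam, h⟩ := hne
    exact ⟨‖lam‖, lam, h, rfl⟩
  · rintro r ⟨lam, h, rfl⟩
    exact hb lam h

open Matrix in
lemma lift_eig {n : ℕ} (H : Matrix (Fin n) (Fin n) ℝ) (α μ : ℝ) (v : Fin n → ℝ)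
    (hv : v ≠ 0) (h : H.mulVec v = μ • v) :
    ∃ vC : Fin n → ℂ, vC ≠ 0 ∧
      ((((1 : Matrix (Fin n) (Fin n) ℝ) - α • H).map Complex.ofReal)).mulVec vC
        = ((1 - α*μ : ℝ) : ℂ) • vC := by
  refine ⟨fun i => ((v i : ℝ) : ℂ), ?_, ?_⟩
  · intro h0
    apply hv
    funext i
    have : ((v i : ℝ) : ℂ) = 0 := by simpa using congrFun h0 i
    exact_mod_cast this
  · have hHv : (H.map Complex.ofReal) *ᵥ (fun i => ((v i : ℝ) : ℂ))
        = ((μ : ℝ) : ℂ) • (fun i => ((v i : ℝ) : ℂ)) := by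
      funext i
      have hreal := congrFun h i
      simp only [Matrix.mulVec, dotProduct, Matrix.map_apply, Pi.smul_apply,
        smul_eq_mul] at hreal ⊢
      push_cast
      exact_mod_cast congrArg (Complex.ofReal) hreal
    rw [one_sub_smul_map, Matrix.sub_mulVec, Matrix.one_mulVec, smul_mulVec, hHv]
    funext i
    simp only [Pi.sub_apply, Pi.smul_apply, smul_eq_mul]
    push_cast
    ring

open Matrix in
lemma eig_range {n : ℕ} (H : Matrix (Fin n) (Fin n) ℝ) (hsymm : H.IsSymm)
    (ℓ L α β : ℝ) (hα : 0 < α)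
    (hext : ∀ μ : ℝ, (∃ v : Fin n → ℝ, v ≠ 0 ∧ H.mulVec v = μ • v) → ℓ ≤ μ ∧ μ ≤ L)
    (lam : ℂ) (h : IsCEigenvalue (TAA ((1 : Matrix (Fin n) (Fin n) ℝ) - α • H) β) lam) :
    lam = 0 ∨ ∃ μ : ℝ, ℓ ≤ μ ∧ μ ≤ L ∧
      lam^2 - (1+(β:ℂ))*((1-α*μ : ℝ):ℂ)*lam + (β:ℂ)*((1-α*μ : ℝ):ℂ) = 0 := by
  rcases taa_eig_to_quad _ β lam h with h0 | ⟨m, v, hv0, hMv, hq⟩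
  · exact Or.inl h0
  · right
    have hH := eig_shift H α hα.ne' m v hMv
    obtain ⟨him, w, hw0, hw⟩ := symm_eig_real H hsymm _ v hv0 hH
    set μ : ℝ := ((1-m)/(α:ℂ)).re with hμdef
    obtain ⟨hμ1, hμ2⟩ := hext μ ⟨w, hw0, hw⟩
    have him' : (1-m).im / α = 0 := by
      rw [← Complex.div_ofReal_im]
      exact him
    have hmim : m.im = 0 := by
      have : (1-m).im = 0 := by
        rcases div_eq_zero_iff.mp him' with h' | h'
        · exact h'
        · exact absurd h' hα.ne'
      simpa using this
    have hmre : m.re = 1 - α*μ := by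
      have : μ = (1-m).re / α := by
        rw [hμdef, ← Complex.div_ofReal_re]
      rw [this]
      have : (1-m).re = 1 - m.re := by simp
      rw [this]
      field_simp
      ring
    have hm : m = ((1-α*μ : ℝ) : ℂ) := by
      apply Complex.ext
      · simpa using hmre
      · simpa using hmim
    rw [hm] at hq
    exact ⟨μ, hμ1, hμ2, hq⟩
theorem stmt10 (n : ℕ) (H : Matrix (Fin n) (Fin n) ℝ) (hsymm : H.IsSymm) (hpd : H.PosDef)
    (ℓ L : ℝ) (hℓ : 0 < ℓ) (hℓL : ℓ < L)
    (hℓeig : ∃ v : Fin n → ℝ, v ≠ 0 ∧ H.mulVec v = ℓ • v)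
    (hLeig : ∃ v : Fin n → ℝ, v ≠ 0 ∧ H.mulVec v = L • v)
    (hext : ∀ μ : ℝ, (∃ v : Fin n → ℝ, v ≠ 0 ∧ H.mulVec v = μ • v) → ℓ ≤ μ ∧ μ ≤ L)
    (κ : ℝ) (hκ : κ = L / ℓ) :
    (Real.sqrt (3 * κ + 1) - 2) / Real.sqrt (3 * κ + 1)
      = 1 - Real.sqrt (4 * ℓ / (3 * L + ℓ)) ∧
    (∀ α β : ℝ, 0 < α →
      1 - Real.sqrt (4 * ℓ / (3 * L + ℓ))
        ≤ specRad (TAA ((1 : Matrix (Fin n) (Fin n) ℝ) - α • H) β)) ∧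
    specRad (TAA ((1 : Matrix (Fin n) (Fin n) ℝ) - (4 / (3 * L + ℓ)) • H)
        ((Real.sqrt (3 * κ + 1) - 2) / (Real.sqrt (3 * κ + 1) + 2)))
      = 1 - Real.sqrt (4 * ℓ / (3 * L + ℓ)) ∧
    (∀ α β : ℝ, 0 < α →
      specRad (TAA ((1 : Matrix (Fin n) (Fin n) ℝ) - α • H) β)
          = 1 - Real.sqrt (4 * ℓ / (3 * L + ℓ)) →
        α = 4 / (3 * L + ℓ) ∧
        β = (Real.sqrt (3 * κ + 1) - 2) / (Real.sqrt (3 * κ + 1) + 2)) ∧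
    1 - Real.sqrt (4 * ℓ / (3 * L + ℓ)) < 1 - Real.sqrt (ℓ / L) := by
  have h3L : (0:ℝ) < 3*L+ℓ := by linarith
  have hfrac0 : 0 < 4*ℓ/(3*L+ℓ) := by positivity
  set c : ℝ := Real.sqrt (4 * ℓ / (3 * L + ℓ)) with hcdef
  have hc2 : c^2 = 4*ℓ/(3*L+ℓ) := Real.sq_sqrt hfrac0.le
  have hc0 : 0 < c := Real.sqrt_pos.mpr hfrac0
  have hc2' : c^2*(3*L+ℓ) = 4*ℓ := by rw [hc2]; field_simp
  have hc1 : c < 1 := by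
    by_contra hge
    push_neg at hge
    have h1 : 1 ≤ c^2 := by nlinarith
    have h2 := mul_le_mul_of_nonneg_right h1 h3L.le
    rw [one_mul] at h2
    linarith [hc2']
  have hκ1 : 1 < κ := by rw [hκ]; exact (one_lt_div hℓ).mpr hℓL
  have hκc : c^2*(3*κ+1) = 4 := by
    rw [hκ]
    have hℓne : ℓ ≠ 0 := hℓ.ne'
    field_simp
    linear_combination hc2'
  set u : ℝ := Real.sqrt (3 * κ + 1) with hudef
  have hu2 : u^2 = 3*κ+1 := Real.sq_sqrt (by linarith)
  have hu0 : 0 < u := Real.sqrt_pos.mpr (by linarith)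
  have hcu : c*u = 2 := by
    have hsq : (c*u)^2 = 4 := by rw [mul_pow, hu2]; exact hκc
    nlinarith [mul_pos hc0 hu0]
  have hpart1 : (u - 2)/u = 1 - c := by
    rw [div_eq_iff hu0.ne']
    linear_combination hcu
  have hβform : (u - 2)/(u + 2) = (1-c)/(1+c) := by
    rw [div_eq_div_iff (by linarith) (by linarith)]
    linear_combination 2*hcu
  obtain ⟨vℓ, hvℓ0, hvℓ⟩ := hℓeig
  obtain ⟨vL, hvL0, hvL⟩ := hLeig
  have hκt : ∀ α : ℝ, κ*(α*ℓ) = α*L := by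
    intro α
    rw [hκ]
    field_simp
  -- Part 2 : lower bound
  have part2 : ∀ α β : ℝ, 0 < α →
      1 - c ≤ specRad (TAA ((1 : Matrix (Fin n) (Fin n) ℝ) - α • H) β) := by
    intro α β hα
    by_contra hcon
    push_neg at hcon
    set ρR : ℝ := specRad (TAA ((1 : Matrix (Fin n) (Fin n) ℝ) - α • H) β) with hρRdef
    set ρ₀ : ℝ := (max ρR 0 + (1-c))/2 with hρ₀def
    have hmax1 : max ρR 0 < 1-c := max_lt hcon (by linarith)
    have hρ₀pos : 0 < ρ₀ := by
      have := le_max_right ρR 0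
      rw [hρ₀def]; linarith
    have hρ₀lt : ρ₀ < 1-c := by rw [hρ₀def]; linarith
    have hρlt : ρR < ρ₀ := by
      have := le_max_left ρR 0
      rw [hρ₀def]; linarith
    have hCℓ := quad_conditions (1-α*ℓ) β ρ₀ hρ₀pos (fun lam hlam => by
      obtain ⟨vC, hvC0, hvC⟩ := lift_eig H α ℓ vℓ hvℓ0 hvℓ
      have hev := taa_eig_of_quad ((1 : Matrix (Fin n) (Fin n) ℝ) - α • H) β
        ((1-α*ℓ : ℝ):ℂ) lam vC hvC0 hvC hlam
      exact le_trans (abs_le_specRad _ hev) hρlt.le)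
    have hCL := quad_conditions (1-α*L) β ρ₀ hρ₀pos (fun lam hlam => by
      obtain ⟨vC, hvC0, hvC⟩ := lift_eig H α L vL hvL0 hvL
      have hev := taa_eig_of_quad ((1 : Matrix (Fin n) (Fin n) ℝ) - α • H) β
        ((1-α*L : ℝ):ℂ) lam vC hvC0 hvC hlam
      exact le_trans (abs_le_specRad _ hev) hρlt.le)
    have hs1 : (1:ℝ) - (1-ρ₀) = ρ₀ := by ring
    have hsc := scalarMain κ c (1-ρ₀) (α*ℓ) β hκ1 hc0 hc1 hκc
      (by linarith) (by linarith)
      (by rw [hs1]; exact hCℓ.1)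
      (by rw [hs1, hκt α]; exact hCL.2.1)
      (by rw [hs1]; exact (abs_le.mp hCℓ.2.2).2)
      (by rw [hs1, hκt α]; exact (abs_le.mp hCL.2.2).2)
    have : 1 - ρ₀ = c := hsc.1
    linarith
  -- Part 3 : value at the optimum
  have hαℓstar : (4/(3*L+ℓ))*ℓ = c^2 := by rw [hc2]; ring
  have part3 : specRad (TAA ((1 : Matrix (Fin n) (Fin n) ℝ) - (4/(3*L+ℓ)) • H)
      ((1-c)/(1+c))) = 1 - c := by
    have hαpos : (0:ℝ) < 4/(3*L+ℓ) := by positivity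
    -- the eigenvalue 1-c exists
    obtain ⟨vC, hvC0, hvC⟩ := lift_eig H (4/(3*L+ℓ)) ℓ vℓ hvℓ0 hvℓ
    have hqreal : (1-c)^2 - (1+(1-c)/(1+c))*(1-4/(3*L+ℓ)*ℓ)*(1-c)
        + ((1-c)/(1+c))*(1-4/(3*L+ℓ)*ℓ) = 0 := by
      have h1c : (0:ℝ) < 1+c := by linarith
      field_simp
      linear_combination (c-1)*hc2'
    have hqC : ((1-c:ℝ):ℂ)^2 - (1+((1-c)/(1+c) : ℝ))*((1-(4/(3*L+ℓ))*ℓ : ℝ):ℂ)*((1-c:ℝ):ℂ)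
        + (((1-c)/(1+c) : ℝ):ℂ)*((1-(4/(3*L+ℓ))*ℓ : ℝ):ℂ) = 0 := by
      have := congrArg (Complex.ofReal) hqreal
      push_cast at this ⊢
      linear_combination this
    have hev := taa_eig_of_quad ((1 : Matrix (Fin n) (Fin n) ℝ) - (4/(3*L+ℓ)) • H)
      ((1-c)/(1+c)) ((1-(4/(3*L+ℓ))*ℓ : ℝ):ℂ) ((1-c:ℝ):ℂ) vC hvC0 hvC hqC
    apply le_antisymm
    · apply specRad_le_of
      · exact ⟨_, hev⟩
      · intro lam hlam
        rcases eig_range H hsymm ℓ L (4/(3*L+ℓ)) ((1-c)/(1+c)) hαpos hext lam hlam with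
          h0 | ⟨μ, hμ1, hμ2, hq⟩
        · rw [h0]
          simp only [norm_zero]
          linarith
        · obtain ⟨o1, o2, o3⟩ := opt_cond ℓ L μ c hℓ hℓL hc0 hc1 hc2' hμ1 hμ2
          exact quad_root_bound (1-(4/(3*L+ℓ))*μ) ((1-c)/(1+c)) (1-c) (by linarith)
            o1 o2 o3 lam hq
    · have := abs_le_specRad _ hev
      rwa [Complex.norm_real, Real.norm_eq_abs, abs_of_pos (by linarith : (0:ℝ) < 1-c)] at this
  -- Part 4 : uniqueness
  have part4 : ∀ α β : ℝ, 0 < α →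
      specRad (TAA ((1 : Matrix (Fin n) (Fin n) ℝ) - α • H) β) = 1 - c →
      α = 4/(3*L+ℓ) ∧ β*(1+c) = 1-c := by
    intro α β hα hsp
    have hρpos : (0:ℝ) < 1-c := by linarith
    have hCℓ := quad_conditions (1-α*ℓ) β (1-c) hρpos (fun lam hlam => by
      obtain ⟨vC, hvC0, hvC⟩ := lift_eig H α ℓ vℓ hvℓ0 hvℓ
      have hev := taa_eig_of_quad ((1 : Matrix (Fin n) (Fin n) ℝ) - α • H) β
        ((1-α*ℓ : ℝ):ℂ) lam vC hvC0 hvC hlam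
      exact hsp ▸ abs_le_specRad _ hev)
    have hCL := quad_conditions (1-α*L) β (1-c) hρpos (fun lam hlam => by
      obtain ⟨vC, hvC0, hvC⟩ := lift_eig H α L vL hvL0 hvL
      have hev := taa_eig_of_quad ((1 : Matrix (Fin n) (Fin n) ℝ) - α • H) β
        ((1-α*L : ℝ):ℂ) lam vC hvC0 hvC hlam
      exact hsp ▸ abs_le_specRad _ hev)
    have hsc := scalarMain κ c c (α*ℓ) β hκ1 hc0 hc1 hκc le_rfl hc1
      (hCℓ.1)
      (by rw [hκt α]; exact hCL.2.1)
      ((abs_le.mp hCℓ.2.2).2)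
      (by rw [hκt α]; exact (abs_le.mp hCL.2.2).2)
    obtain ⟨-, ht, hβ⟩ := hsc
    constructor
    · -- α*ℓ = c^2 = 4ℓ/(3L+ℓ)
      rw [hc2] at ht
      have h1 : α * ℓ * (3*L+ℓ) = 4*ℓ := by
        rw [ht]; field_simp
      have h2 : (α * (3*L+ℓ)) * ℓ = (4:ℝ) * ℓ := by linarith [h1]
      have h3 : α * (3*L+ℓ) = 4 := mul_right_cancel₀ hℓ.ne' h2
      field_simp
      linarith
    · exact hβ
  refine ⟨hpart1, part2, ?_, ?_, ?_⟩
  · rw [hβform]; exact part3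
  · intro α β hα hsp
    obtain ⟨hαeq, hβeq⟩ := part4 α β hα hsp
    refine ⟨hαeq, ?_⟩
    rw [hβform, eq_div_iff (by linarith : (1:ℝ)+c ≠ 0)]
    exact hβeq
  · have hlt : Real.sqrt (ℓ/L) < c := by
      rw [hcdef]
      apply Real.sqrt_lt_sqrt (div_nonneg hℓ.le (by linarith))
      rw [div_lt_div_iff₀ (by linarith) h3L]
      nlinarith
    linarith
end

section
/- Let B be an n×n real matrix whose spectral radius ρ_B satisfies 0 < ρ_B < 1, and assume that ρ_B itself is a (real) eigenvalue of B. Then for every β ∈ ℝ the spectral radius of T(B,β) satisfies ρ(T(B,β)) ≥ 1 − √(1−ρ_B); and if ρ(T(B,β)) = 1 − √(1−ρ_B) for some β ∈ ℝ, then β = (1−√(1−ρ_B))/(1+√(1−ρ_B)). -/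
/-- Any complex eigenvalue of a real matrix is bounded in modulus by the sum of
absolute values of the entries. -/
lemma eig_abs_le {m : Type*} [Fintype m] (A : Matrix m m ℝ) {lam : ℂ}
    (h : IsCEigenvalue A lam) : ‖lam‖ ≤ ∑ i, ∑ j, |A i j| := by
  obtain ⟨v, hv0, hv⟩ := h
  obtain ⟨i0, hi0⟩ := Function.ne_iff.mp hv0
  obtain ⟨i, -, hi⟩ := Finset.exists_max_image Finset.univ
    (fun i => ‖v i‖) ⟨i0, Finset.mem_univ i0⟩
  have hvi : 0 < ‖v i‖ := by
    have : 0 < ‖v i0‖ := by simpa using hi0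
    linarith [hi i0 (Finset.mem_univ i0)]
  have hrow : ‖lam * v i‖ ≤ (∑ j, |A i j|) * ‖v i‖ := by
    have h1 : (A.map (Complex.ofReal)).mulVec v i = lam * v i := by
      have := congrFun hv i
      simpa [Pi.smul_apply, smul_eq_mul] using this
    have h2 : (A.map (Complex.ofReal)).mulVec v i = ∑ j, (A i j : ℂ) * v j := by
      simp [Matrix.mulVec, dotProduct, Matrix.map_apply]
    rw [← h1, h2]
    calc ‖∑ j, (A i j : ℂ) * v j‖
        ≤ ∑ j, ‖(A i j : ℂ) * v j‖ := norm_sum_le _ _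
      _ ≤ ∑ j, |A i j| * ‖v i‖ := by
          apply Finset.sum_le_sum
          intro j _
          rw [norm_mul, Complex.norm_real, Real.norm_eq_abs]
          exact mul_le_mul_of_nonneg_left (hi j (Finset.mem_univ j)) (abs_nonneg _)
      _ = (∑ j, |A i j|) * ‖v i‖ := by rw [Finset.sum_mul]
  have hsum : (∑ j, |A i j|) ≤ ∑ k, ∑ j, |A k j| := by
    apply Finset.single_le_sum (f := fun k => ∑ j, |A k j|)
    · intro k _; positivity
    · exact Finset.mem_univ i
  rw [norm_mul] at hrow
  have := mul_le_mul_of_nonneg_right hsum (norm_nonneg (v i))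
  nlinarith [this, hrow]

/-- The spectral radius dominates the modulus of any eigenvalue. -/
lemma le_specRad {m : Type*} [Fintype m] (A : Matrix m m ℝ) {lam : ℂ}
    (h : IsCEigenvalue A lam) : ‖lam‖ ≤ specRad A := by
  apply le_csSup
  · exact ⟨∑ i, ∑ j, |A i j|, fun r ⟨l, hl, hr⟩ => hr ▸ eig_abs_le A hl⟩
  · exact ⟨lam, h, rfl⟩

/-- Any root of the characteristic quadratic derived from a real eigenpair of `B`
is a complex eigenvalue of `TAA B β`. -/
lemma TAA_eig {n : ℕ} (B : Matrix (Fin n) (Fin n) ℝ) (β ρ : ℝ)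
    (v : Fin n → ℝ) (hv0 : v ≠ 0) (hv : B.mulVec v = ρ • v)
    (μ : ℂ) (hμ : μ*μ = (((1+β)*ρ : ℝ) : ℂ)*μ - ((β*ρ : ℝ) : ℂ)) :
    IsCEigenvalue (TAA B β) μ := by
  have hBv : ∀ i, (∑ j, (B i j : ℂ) * (v j : ℂ)) = (ρ : ℂ) * (v i : ℂ) := by
    intro i
    have h := congrFun hv i
    simp only [Matrix.mulVec, dotProduct, Pi.smul_apply, smul_eq_mul] at h
    exact_mod_cast congrArg (Complex.ofReal) h
  refine ⟨Sum.elim (fun i => μ * (v i : ℂ)) (fun i => (v i : ℂ)), ?_, ?_⟩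
  · intro h
    apply hv0
    funext i
    have := congrFun h (Sum.inr i)
    simpa using this
  · funext x
    cases x with
    | inl i =>
      simp only [Matrix.mulVec, dotProduct, Fintype.sum_sum_type, TAA,
        Matrix.map_apply, Matrix.fromBlocks, Matrix.of_apply, Sum.elim_inl, Sum.elim_inr,
        Matrix.smul_apply, smul_eq_mul, Pi.smul_apply]
      push_cast
      have e1 : ∑ j, ((1+β) : ℂ) * (B i j : ℂ) * (μ * (v j : ℂ))
          = ((1+β) : ℂ) * μ * ((ρ:ℂ) * (v i : ℂ)) := by
        rw [← hBv i, Finset.mul_sum]; apply Finset.sum_congr rfl; intro j _; ring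
      have e2 : ∑ j, (-β : ℂ) * (B i j : ℂ) * (v j : ℂ)
          = (-β : ℂ) * ((ρ:ℂ) * (v i : ℂ)) := by
        rw [← hBv i, Finset.mul_sum]; apply Finset.sum_congr rfl; intro j _; ring
      rw [e1, e2]
      have := hμ
      push_cast at this
      linear_combination (-(v i : ℂ)) * this
    | inr i =>
      simp only [Matrix.mulVec, dotProduct, Fintype.sum_sum_type, TAA,
        Matrix.map_apply, Matrix.fromBlocks, Matrix.of_apply, Sum.elim_inl, Sum.elim_inr,
        Matrix.one_apply, Matrix.zero_apply, Pi.smul_apply, smul_eq_mul]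
      simp [apply_ite, Finset.sum_ite_eq]

set_option maxHeartbeats 2000000 in
theorem stmt11 (n : ℕ) (B : Matrix (Fin n) (Fin n) ℝ) (ρB : ℝ)
    (h0 : 0 < ρB) (h1 : ρB < 1)
    (hρ : specRad B = ρB)
    (heig : ∃ v : Fin n → ℝ, v ≠ 0 ∧ B.mulVec v = ρB • v) :
    (∀ β : ℝ, 1 - Real.sqrt (1 - ρB) ≤ specRad (TAA B β)) ∧
    (∀ β : ℝ, specRad (TAA B β) = 1 - Real.sqrt (1 - ρB) →
      β = (1 - Real.sqrt (1 - ρB)) / (1 + Real.sqrt (1 - ρB))) := by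
  obtain ⟨v, hv0, hv⟩ := heig
  set s := Real.sqrt (1 - ρB) with hsdef
  have hs2 : s ^ 2 = 1 - ρB := Real.sq_sqrt (by linarith)
  have hs0 : 0 < s := Real.sqrt_pos.mpr (by linarith)
  have hs1 : s < 1 := by nlinarith
  have hρs : ρB = 1 - s^2 := by linarith
  -- key: for every β there is a root μ of the quadratic with the required bounds
  have key : ∀ β : ℝ, ∃ μ : ℂ,
      μ*μ = (((1+β)*ρB : ℝ) : ℂ)*μ - ((β*ρB : ℝ) : ℂ) ∧
      1 - s ≤ ‖μ‖ ∧
      (β ≠ (1 - s)/(1 + s) → 1 - s < ‖μ‖) := by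
    intro β
    have hne : β ≠ (1 - s)/(1 + s) → β * (1+s) ≠ 1 - s := by
      intro h h'
      apply h
      field_simp
      linarith
    have hfac : ((1+β)*ρB)^2 - 4*(β*ρB)
        = ρB * (((1-s)*β - (1+s)) * ((1+s)*β - (1-s))) := by
      rw [hρs]; ring
    rcases le_or_gt 0 (((1+β)*ρB)^2 - 4*(β*ρB)) with hΔ | hΔ
    · -- two real roots; take the larger one
      set d := Real.sqrt (((1+β)*ρB)^2 - 4*(β*ρB)) with hddef
      have hd0 : 0 ≤ d := Real.sqrt_nonneg _
      have hd2 : d^2 = ((1+β)*ρB)^2 - 4*(β*ρB) := Real.sq_sqrt hΔ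
      set m : ℝ := ((1+β)*ρB + d)/2 with hmdef
      have hquadR : m*m = ((1+β)*ρB)*m - β*ρB := by
        rw [hmdef]
        linear_combination (1/4 : ℝ) * hd2
      have hquad : (m:ℂ)*(m:ℂ) = (((1+β)*ρB : ℝ) : ℂ)*(m:ℂ) - ((β*ρB : ℝ) : ℂ) := by
        exact_mod_cast congrArg (Complex.ofReal) hquadR
      have hmge : 1 - s ≤ m ∧ (β * (1+s) ≠ 1 - s → 1 - s < m) := by
        rcases le_or_gt (β*(1+s)) (1-s) with hb | hb
        · -- small β: larger root is at least 1 - s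
          have hid : (2*(1-s) - (1+β)*ρB)^2 - (((1+β)*ρB)^2 - 4*(β*ρB))
              = 4*s*(1-s)*(β*(1+s) - (1-s)) := by
            rw [hρs]; ring
          have hprod : 0 ≤ s*(1-s)*((1-s) - β*(1+s)) :=
            mul_nonneg (mul_nonneg hs0.le (by linarith)) (by linarith)
          have ht2 : (2*(1-s) - (1+β)*ρB)^2 ≤ d^2 := by
            rw [hd2]
            nlinarith [hid, hprod]
          constructor
          · rw [hmdef]
            nlinarith [ht2, hd0]
          · intro hβne
            have hb' : β*(1+s) < 1 - s := lt_of_le_of_ne hb hβne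
            have hprod' : 0 < s*(1-s)*((1-s) - β*(1+s)) :=
              mul_pos (mul_pos hs0 (by linarith)) (by linarith)
            have ht2' : (2*(1-s) - (1+β)*ρB)^2 < d^2 := by
              rw [hd2]
              nlinarith [hid, hprod']
            rw [hmdef]
            nlinarith [ht2', hd0]
        · -- large β: Δ ≥ 0 forces (1-s)β ≥ 1+s, and the root exceeds 1+s
          have hY : 0 < (1+s)*β - (1-s) := by linarith
          have hP : 0 ≤ ((1-s)*β - (1+s)) * ((1+s)*β - (1-s)) := by
            rw [hfac] at hΔ
            nlinarith [hΔ, h0]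
          have hfirst : 0 ≤ (1-s)*β - (1+s) := by
            nlinarith [hP, hY]
          have hm1s : 1 + s ≤ m := by
            rw [hmdef, hρs]
            nlinarith [hd0, mul_nonneg (by linarith : (0:ℝ) ≤ 1+s) hfirst]
          exact ⟨by linarith, fun _ => by linarith⟩
      refine ⟨(m:ℂ), hquad, ?_, ?_⟩
      · rw [Complex.norm_real, Real.norm_eq_abs]
        exact le_trans hmge.1 (le_abs_self m)
      · intro hβ
        rw [Complex.norm_real, Real.norm_eq_abs]
        exact lt_of_lt_of_le (hmge.2 (hne hβ)) (le_abs_self m)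
    · -- complex conjugate roots
      have hβpos : 0 < β := by nlinarith [sq_nonneg ((1+β)*ρB), hΔ, h0]
      set a : ℝ := (1+β)*ρB/2 with hadef
      set b : ℝ := Real.sqrt (-(((1+β)*ρB)^2 - 4*(β*ρB)))/2 with hbdef
      have hb2 : b^2 = -(((1+β)*ρB)^2 - 4*(β*ρB))/4 := by
        rw [hbdef, div_pow, Real.sq_sqrt (by linarith)]
        ring
      set μ : ℂ := (a:ℂ) + (b:ℂ) * Complex.I with hμdef
      have hre : μ.re = a := by simp [hμdef]
      have him : μ.im = b := by simp [hμdef]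
      have hreid : a*a - b*b = ((1+β)*ρB)*a - β*ρB := by
        rw [hadef]
        linear_combination (-1 : ℝ) * hb2
      have himid : a*b + b*a = ((1+β)*ρB)*b := by
        rw [hadef]; ring
      have hquad : μ*μ = (((1+β)*ρB : ℝ) : ℂ)*μ - ((β*ρB : ℝ) : ℂ) := by
        apply Complex.ext
        · simp only [Complex.mul_re, Complex.sub_re, Complex.ofReal_re, Complex.ofReal_im,
            hre, him]
          linear_combination hreid
        · simp only [Complex.mul_im, Complex.sub_im, Complex.ofReal_re, Complex.ofReal_im,
            hre, him]
          linear_combination himid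
      have habs2 : (‖μ‖)^2 = a^2 + b^2 := by
        rw [Complex.sq_norm, Complex.normSq_apply, hre, him]
        ring
      have hab : a^2 + b^2 = β*ρB := by
        rw [hadef]
        linear_combination hb2
      have hβb : 1 - s < β*(1+s) := by
        by_contra hcon
        push_neg at hcon
        have h1' : (1-s)*β - (1+s) < 0 := by nlinarith
        have h2' : (1+s)*β - (1-s) ≤ 0 := by linarith
        rw [hfac] at hΔ
        nlinarith [hΔ, h0, mul_nonneg (neg_nonneg.mpr h1'.le) (neg_nonneg.mpr h2')]
      have hgt : 1 - s < ‖μ‖ := by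
        have hβρ : (1-s)^2 < β*ρB := by
          rw [hρs]
          nlinarith [hβb, hs0, hs1]
        nlinarith [habs2, hab, norm_nonneg μ, hβρ, hs0, hs1]
      exact ⟨μ, hquad, hgt.le, fun _ => hgt⟩
  constructor
  · intro β
    obtain ⟨μ, hq, hge, -⟩ := key β
    have := le_specRad (TAA B β) (TAA_eig B β ρB v hv0 hv μ hq)
    linarith
  · intro β hβeq
    by_contra hneq
    obtain ⟨μ, hq, -, hgt⟩ := key β
    have h2 := le_specRad (TAA B β) (TAA_eig B β ρB v hv0 hv μ hq)
    rw [hβeq] at h2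
    have := hgt hneq
    linarith
end
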